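/- For n ≥ 3, every vertex of the inclusion graph G_n on nonempty proper subsets of {1,...,n} is mutually maximally distant from some other vertex; specifically, every vertex A is mutually maximally distant from its complement A^c. Hence the strong resolving graph of G_n has the same vertex set as G_n. -/

import Mathlib

open SimpleGraph Finset

variable {V : Type*}

/-- A set of vertices is resolving if distance vectors to it distinguish vertices. -/
def IsResolving (G : SimpleGraph V) (S : Set V) : Prop :=
  ∀ u v : V, (∀ w ∈ S, G.dist u w = G.dist v w) → u = v

/-- The metric dimension: the least size of a (finite) resolving set. -/
noncomputable def metricDim (G : SimpleGraph V) : ℕ :=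
  sInf {k | ∃ S : Finset V, S.card = k ∧ IsResolving G ↑S}

/-- Two vertices are mutually maximally distant. -/
def MMD (G : SimpleGraph V) (u v : V) : Prop :=
  u ≠ v ∧ (∀ w, G.Adj u w → G.dist v w ≤ G.dist u v) ∧
    (∀ w, G.Adj v w → G.dist u w ≤ G.dist u v)

/-- The strong resolving graph: edges between mutually maximally distant vertices. -/
def strongResolvingGraph (G : SimpleGraph V) : SimpleGraph V where
  Adj u v := MMD G u v
  symm := ⟨by
    rintro u v ⟨hne, h1, h2⟩
    refine ⟨hne.symm, ?_, ?_⟩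
    · intro w hw
      rw [SimpleGraph.dist_comm (u := v) (v := u)]
      exact h2 w hw
    · intro w hw
      rw [SimpleGraph.dist_comm (u := v) (v := u)]
      exact h1 w hw⟩
  loopless := ⟨fun v h => h.1 rfl⟩

/-- A set strongly resolving a graph. -/
def IsStrongResolving (G : SimpleGraph V) (S : Set V) : Prop :=
  ∀ u v : V, u ≠ v → ∃ w ∈ S,
    G.dist w u = G.dist w v + G.dist v u ∨ G.dist w v = G.dist w u + G.dist u v

/-- Strong metric dimension. -/
noncomputable def sdim (G : SimpleGraph V) : ℕ :=
  sInf {k | ∃ S : Finset V, S.card = k ∧ IsStrongResolving G ↑S}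

/-- An independent set of vertices. -/
def IsIndepFinset (G : SimpleGraph V) (S : Finset V) : Prop :=
  ∀ u ∈ S, ∀ v ∈ S, u ≠ v → ¬ G.Adj u v

/-- Independence number. -/
noncomputable def indepNum (G : SimpleGraph V) : ℕ :=
  sSup {k | ∃ S : Finset V, S.card = k ∧ IsIndepFinset G S}

/-- Vertices of the inclusion graph on `{1,...,n}`: nonempty proper subsets. -/
def SubVert (n : ℕ) := {A : Finset (Fin n) // A.Nonempty ∧ A ≠ Finset.univ}

/-- The inclusion graph on nonempty proper subsets of `{1,...,n}`. -/
def inclGraph (n : ℕ) : SimpleGraph (SubVert n) where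
  Adj A B := A.1 ⊂ B.1 ∨ B.1 ⊂ A.1
  symm := ⟨fun _ _ h => h.symm⟩
  loopless := ⟨fun A h => by
    rcases h with h | h <;> exact (ssubset_irrefl A.1) h⟩

/-- Complement of a vertex of the inclusion graph. -/
def complVert {n : ℕ} (A : SubVert n) : SubVert n :=
  ⟨A.1ᶜ,
    Finset.nonempty_iff_ne_empty.mpr fun h => A.2.2 (by simpa using h),
    fun h => (Finset.nonempty_iff_ne_empty.mp A.2.1) (by simpa using h)⟩

/-- Vertices of the inclusion ideal graph of a product of chain rings:
tuples in a product of chains, excluding bottom and top. -/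
def ChainVert {m : ℕ} (d : Fin m → ℕ) := {v : ∀ i, Fin (d i + 2) // v ≠ ⊥ ∧ v ≠ ⊤}

/-- The inclusion graph on a product of chains (minus bottom and top),
modelling the inclusion ideal graph of a product of principal ideal rings. -/
def chainGraph {m : ℕ} (d : Fin m → ℕ) : SimpleGraph (ChainVert d) where
  Adj I J := I.1 < J.1 ∨ J.1 < I.1
  symm := ⟨fun _ _ h => h.symm⟩
  loopless := ⟨fun I h => by rcases h with h | h <;> exact lt_irrefl _ h⟩

section Proof

variable {n : ℕ}

lemma compl_ne (A : SubVert n) : A ≠ complVert A := by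
  intro h
  obtain ⟨a, ha⟩ := A.2.1
  have h1 : A.1 = A.1ᶜ := congrArg Subtype.val h
  have : a ∈ A.1ᶜ := h1 ▸ ha
  exact Finset.mem_compl.mp this ha

lemma walk3 (hn : 3 ≤ n) (A : SubVert n) (hA : 2 ≤ A.1.card) :
    ∃ p : (inclGraph n).Walk A (complVert A), p.length = 3 := by
  obtain ⟨a, ha⟩ := A.2.1
  have hsing_ne : ({a} : Finset (Fin n)) ≠ Finset.univ := by
    intro h
    have := congrArg Finset.card h
    simp [Finset.card_univ] at this
    omega
  have S1 : SubVert n := ⟨{a}, Finset.singleton_nonempty a, hsing_ne⟩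
  have hins_ne : insert a A.1ᶜ ≠ Finset.univ := by
    intro h
    obtain ⟨b, hb, hba⟩ := Finset.exists_mem_ne hA a
    have : b ∈ insert a A.1ᶜ := by rw [h]; exact Finset.mem_univ b
    rcases Finset.mem_insert.mp this with h' | h'
    · exact hba h'
    · exact (Finset.mem_compl.mp h') hb
  set S1 : SubVert n := ⟨{a}, Finset.singleton_nonempty a, hsing_ne⟩ with hS1
  set S2 : SubVert n := ⟨insert a A.1ᶜ, ⟨a, Finset.mem_insert_self a _⟩, hins_ne⟩ with hS2
  have adj1 : (inclGraph n).Adj A S1 := by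
    right
    constructor
    · simpa [hS1] using ha
    · intro h
      have := Finset.card_le_card h
      simp [hS1] at this
      omega
  have adj2 : (inclGraph n).Adj S1 S2 := by
    left
    constructor
    · intro x hx; simp [hS1] at hx; simp [hS2, hx]
    · intro h
      obtain ⟨c, hc⟩ := (complVert A).2.1
      have hcA : c ∈ A.1ᶜ := hc
      have : c ∈ ({a} : Finset (Fin n)) := h (Finset.mem_insert_of_mem hcA)
      simp at this
      exact (Finset.mem_compl.mp hcA) (this ▸ ha)
  have adj3 : (inclGraph n).Adj S2 (complVert A) := by
    right
    constructor
    · exact Finset.subset_insert _ _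
    · intro h
      have : a ∈ A.1ᶜ := h (Finset.mem_insert_self a _)
      exact (Finset.mem_compl.mp this) ha
  exact ⟨SimpleGraph.Walk.cons adj1 (SimpleGraph.Walk.cons adj2
    (SimpleGraph.Walk.cons adj3 SimpleGraph.Walk.nil)), rfl⟩

lemma compl_compl_vert (A : SubVert n) : complVert (complVert A) = A := by
  apply Subtype.ext
  exact compl_compl A.1

lemma walk_compl (hn : 3 ≤ n) (A : SubVert n) :
    ∃ p : (inclGraph n).Walk A (complVert A), p.length = 3 := by
  by_cases h : 2 ≤ A.1.card
  · exact walk3 hn A h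
  · have h1 : A.1.card = 1 := by
      have := Finset.card_pos.mpr A.2.1
      omega
    have hc : 2 ≤ (complVert A).1.card := by
      have : (complVert A).1.card = n - A.1.card := by
        simp [complVert, Finset.card_compl]
      omega
    obtain ⟨p, hp⟩ := walk3 hn (complVert A) hc
    exact ⟨(p.copy rfl (compl_compl_vert A)).reverse, by simpa using hp⟩

lemma reach_compl (hn : 3 ≤ n) (A : SubVert n) :
    (inclGraph n).Reachable A (complVert A) := by
  obtain ⟨p, _⟩ := walk_compl hn A
  exact ⟨p⟩

lemma dist_compl_le (hn : 3 ≤ n) (A : SubVert n) :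
    (inclGraph n).dist A (complVert A) ≤ 3 := by
  obtain ⟨p, hp⟩ := walk_compl hn A
  exact le_trans (SimpleGraph.dist_le p) (le_of_eq hp)

lemma dist_le_three (hn : 3 ≤ n) (A B : SubVert n) :
    (inclGraph n).dist A B ≤ 3 := by
  by_cases hAB : A = B
  · subst hAB; simp [SimpleGraph.dist_self]
  have hne : A.1 ≠ B.1 := fun h => hAB (Subtype.ext h)
  by_cases hsub : A.1 ⊆ B.1
  · have : (inclGraph n).Adj A B := Or.inl ⟨hsub, fun h => hne (le_antisymm hsub h)⟩
    calc (inclGraph n).dist A B ≤ 1 := SimpleGraph.dist_le this.toWalk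
      _ ≤ 3 := by omega
  by_cases hsub' : B.1 ⊆ A.1
  · have : (inclGraph n).Adj A B := Or.inr ⟨hsub', fun h => hne (le_antisymm h hsub')⟩
    calc (inclGraph n).dist A B ≤ 1 := SimpleGraph.dist_le this.toWalk
      _ ≤ 3 := by omega
  by_cases hint : (A.1 ∩ B.1).Nonempty
  · set C : SubVert n := ⟨A.1 ∩ B.1, hint, fun h => A.2.2 (by
      have : A.1 ∩ B.1 ⊆ A.1 := Finset.inter_subset_left
      rw [h] at this
      exact Finset.univ_subset_iff.mp this)⟩ with hC
    have adj1 : (inclGraph n).Adj A C := Or.inr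
      ⟨Finset.inter_subset_left, fun h => hsub (fun x hx => Finset.mem_inter.mp (h hx) |>.2)⟩
    have adj2 : (inclGraph n).Adj C B := Or.inl
      ⟨Finset.inter_subset_right, fun h => hsub' (fun x hx => Finset.mem_inter.mp (h hx) |>.1)⟩
    have := SimpleGraph.dist_le (SimpleGraph.Walk.cons adj1
      (SimpleGraph.Walk.cons adj2 SimpleGraph.Walk.nil))
    simp [SimpleGraph.Walk.length_cons] at this
    omega
  by_cases huni : A.1 ∪ B.1 = Finset.univ
  · have hBc : B = complVert A := by
      apply Subtype.ext
      apply Finset.eq_of_subset_of_card_le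
      · intro x hx
        simp only [complVert, Finset.mem_compl]
        intro hxA
        exact hint ⟨x, Finset.mem_inter.mpr ⟨hxA, hx⟩⟩
      · have h1 : A.1.card + B.1.card ≥ n := by
          have := Finset.card_union_le A.1 B.1
          rw [huni, Finset.card_univ] at this
          simpa using this
        have h2 : (complVert A).1.card = n - A.1.card := by
          simp [complVert, Finset.card_compl]
        have h3 : A.1.card ≤ n := Finset.card_le_card (Finset.subset_univ _) |>.trans
          (by simp)
        omega
    rw [hBc]
    exact dist_compl_le hn A
  · set C : SubVert n := ⟨A.1 ∪ B.1, A.2.1.mono Finset.subset_union_left, huni⟩ with hC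
    have adj1 : (inclGraph n).Adj A C := Or.inl
      ⟨Finset.subset_union_left, fun h => hsub' (fun x hx => h (Finset.mem_union_right _ hx))⟩
    have adj2 : (inclGraph n).Adj C B := Or.inr
      ⟨Finset.subset_union_right, fun h => hsub (fun x hx => h (Finset.mem_union_left _ hx))⟩
    have := SimpleGraph.dist_le (SimpleGraph.Walk.cons adj1
      (SimpleGraph.Walk.cons adj2 SimpleGraph.Walk.nil))
    simp [SimpleGraph.Walk.length_cons] at this
    omega

lemma not_adj_compl {n : ℕ} (A : SubVert n) : ¬ (inclGraph n).Adj A (complVert A) := by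
  rintro (h | h)
  · obtain ⟨a, ha⟩ := A.2.1
    exact (Finset.mem_compl.mp (h.1 ha)) ha
  · obtain ⟨a, ha⟩ := (complVert A).2.1
    exact (Finset.mem_compl.mp ha) (h.1 ha)

lemma no_common {n : ℕ} (A C : SubVert n) (h1 : (inclGraph n).Adj A C)
    (h2 : (inclGraph n).Adj C (complVert A)) : False := by
  obtain ⟨a, ha⟩ := A.2.1
  obtain ⟨b, hb⟩ := (complVert A).2.1
  have hbc : b ∈ A.1ᶜ := hb
  rcases h1 with h1 | h1 <;> rcases h2 with h2 | h2
  · exact Finset.mem_compl.mp (h2.1 (h1.1 ha)) ha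
  · have : C.1 = Finset.univ := Finset.eq_univ_of_forall (fun x => by
      by_cases hx : x ∈ A.1
      · exact h1.1 hx
      · exact h2.1 (Finset.mem_compl.mpr hx))
    exact C.2.2 this
  · obtain ⟨c, hc⟩ := C.2.1
    exact Finset.mem_compl.mp (h2.1 hc) (h1.1 hc)
  · exact Finset.mem_compl.mp hbc (h1.1 (h2.1 hbc))

lemma walk_ge_three {n : ℕ} : ∀ (u v : SubVert n) (p : (inclGraph n).Walk u v),
    v = complVert u → 3 ≤ p.length := by
  intro u v p
  cases p with
  | nil => intro h; exact absurd h (compl_ne u)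
  | cons h q =>
    cases q with
    | nil => intro heq; subst heq; exact absurd h (not_adj_compl u)
    | cons h' q' =>
      cases q' with
      | nil => intro heq; subst heq; exact absurd (no_common u _ h h') not_false
      | cons h'' q'' => intro _; simp [SimpleGraph.Walk.length_cons]

lemma dist_compl {n : ℕ} (hn : 3 ≤ n) (A : SubVert n) :
    (inclGraph n).dist A (complVert A) = 3 := by
  refine le_antisymm (dist_compl_le hn A) ?_
  obtain ⟨p, hp⟩ := (reach_compl hn A).exists_walk_length_eq_dist
  calc 3 ≤ p.length := walk_ge_three A _ p rfl
    _ = _ := hp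


theorem stmt8 (n : ℕ) (hn : 3 ≤ n) :
    (∀ A : SubVert n, MMD (inclGraph n) A (complVert A)) ∧
      (∀ A : SubVert n, ∃ B : SubVert n, MMD (inclGraph n) A B) := by
  have hmmd : ∀ A : SubVert n, MMD (inclGraph n) A (complVert A) := by
    intro A
    refine ⟨compl_ne A, ?_, ?_⟩
    · intro w _
      rw [dist_compl hn A]
      exact dist_le_three hn _ _
    · intro w _
      rw [dist_compl hn A]
      exact dist_le_three hn _ _
  exact ⟨hmmd, fun A => ⟨complVert A, hmmd A⟩⟩
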